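/- Let v be a cut-vertex of a connected signed graph Γ and Γ_1 a connected component of Γ − v. If η(Γ_1) = η(Γ_1 + v) − 1, then η(Γ) = η(Γ_1) + η(Γ − Γ_1), where Γ_1 + v is the subgraph of Γ induced on V(Γ_1) ∪ {v} and Γ − Γ_1 is the subgraph induced on V(Γ) \ V(Γ_1). -/

import Mathlib

open scoped Classical

/-- The nullity of a real matrix: the dimension of the kernel of the
associated linear map. -/
noncomputable def Matrix.nullity {n : Type*} [Fintype n] (A : Matrix n n ℝ) : ℕ :=
  Module.finrank ℝ (LinearMap.ker A.mulVecLin)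

/-- The nullity of the signed subgraph induced on a set `S` of vertices,
given the full adjacency matrix `A`. -/
noncomputable def inducedNullity {V : Type*} [Fintype V]
    (A : Matrix V V ℝ) (S : Set V) : ℕ :=
  (A.submatrix (fun x : S => (x : V)) (fun x : S => (x : V))).nullity

attribute [-instance] Set.fintypeUnion Set.fintypeSingleton Set.fintypeInsert
  Set.fintypeInsert' Set.fintypeSep Set.decidableUnion Set.decidableCompl
  Set.decidableSingleton Set.decidableSetOf

namespace CutVertexAux
set_option linter.unusedSectionVars false
variable {V : Type*} [Fintype V]

lemma sum_split (S : Set V) (f : V → ℝ) :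
    ∑ j : V, f j = ∑ j : S, f j + ∑ j : ↥Sᶜ, f j := by
  rw [Finset.sum_set_coe, Finset.sum_set_coe, ← Finset.sum_add_sum_compl S.toFinset]
  congr 1
  apply Finset.sum_congr _ (fun _ _ => rfl)
  ext x; simp

/-- Extension by zero, as a linear map. -/
noncomputable def ext0 (P : Set V) : (↥P → ℝ) →ₗ[ℝ] (V → ℝ) where
  toFun x u := if h : u ∈ P then x ⟨u, h⟩ else 0
  map_add' x y := by ext u; by_cases h : u ∈ P <;> simp [h]
  map_smul' c x := by ext u; by_cases h : u ∈ P <;> simp [h]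

lemma ext0_coe (P : Set V) (x : ↥P → ℝ) (j : ↥P) : ext0 P x j = x j := by
  simp [ext0]

lemma ext0_not_mem (P : Set V) (x : ↥P → ℝ) {u : V} (h : u ∉ P) : ext0 P x u = 0 :=
  dif_neg h

lemma mulVec_ext0 (A : Matrix V V ℝ) (P : Set V) (x : ↥P → ℝ) (i : V) :
    A.mulVec (ext0 P x) i = ∑ j : P, A i j * x j := by
  simp only [Matrix.mulVec, dotProduct]
  rw [sum_split P (fun j => A i j * ext0 P x j)]
  have h2 : ∑ j : ↥Pᶜ, A i j * ext0 P x j = 0 :=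
    Finset.sum_eq_zero (fun j _ => by rw [ext0_not_mem P x j.2, mul_zero])
  rw [h2, add_zero]
  exact Finset.sum_congr rfl fun j _ => by rw [ext0_coe]

lemma submatrix_mulVec (A : Matrix V V ℝ) (P : Set V) (x : ↥P → ℝ) (i : ↥P) :
    (A.submatrix (fun a : P => (a : V)) (fun a : P => (a : V))).mulVec x i
      = A.mulVec (ext0 P x) i := by
  rw [mulVec_ext0]
  simp only [Matrix.mulVec, dotProduct, Matrix.submatrix_apply]

lemma mem_ker_submatrix (A : Matrix V V ℝ) (P : Set V) (x : ↥P → ℝ) :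
    x ∈ LinearMap.ker (A.submatrix (fun a : P => (a : V)) (fun a : P => (a : V))).mulVecLin
      ↔ ∀ i : ↥P, A.mulVec (ext0 P x) i = 0 := by
  rw [LinearMap.mem_ker, Matrix.mulVecLin_apply, funext_iff]
  exact forall_congr' fun i => by rw [submatrix_mulVec]; rfl

/-- The linear functional `x ↦ ∑_{j ∈ S} A v j * x j`. -/
noncomputable def dvec (A : Matrix V V ℝ) (S : Set V) (v : V) : (↥S → ℝ) →ₗ[ℝ] ℝ where
  toFun x := ∑ j : S, A v j * x j
  map_add' x y := by simp [mul_add, Finset.sum_add_distrib]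
  map_smul' c x := by
    simp only [Pi.smul_apply, smul_eq_mul, RingHom.id_apply, Finset.mul_sum]
    exact Finset.sum_congr rfl fun j _ => by ring

set_option maxHeartbeats 1000000 in
set_option synthInstance.maxHeartbeats 400000 in
lemma extraction [DecidableEq V] (A : Matrix V V ℝ) (S : Set V) (v : V)
    (hvS : v ∉ S) (hAvv : A v v = 0)
    (hη : Module.finrank ℝ (LinearMap.ker
            (A.submatrix (fun a : S => (a : V)) (fun a : S => (a : V))).mulVecLin) + 1
        = Module.finrank ℝ (LinearMap.ker
            (A.submatrix (fun a : ↥(S ∪ {v}) => (a : V))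
                         (fun a : ↥(S ∪ {v}) => (a : V))).mulVecLin)) :
    (∀ x ∈ LinearMap.ker
        (A.submatrix (fun a : S => (a : V)) (fun a : S => (a : V))).mulVecLin,
        ∑ j : S, A v j * x j = 0) ∧
    ∃ x₀ : ↥S → ℝ,
      (∀ i : ↥S, (∑ j : S, A (i : V) j * x₀ j) + A i v = 0) ∧
      (∑ j : S, A v j * x₀ j) = 0 := by
  have hvW : v ∈ S ∪ {v} := Or.inr rfl
  have hSW : S ⊆ S ∪ {v} := Set.subset_union_left
  set KB := LinearMap.ker
      (A.submatrix (fun a : S => (a : V)) (fun a : S => (a : V))).mulVecLin with hKB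
  set KW := LinearMap.ker
      (A.submatrix (fun a : ↥(S ∪ {v}) => (a : V))
                   (fun a : ↥(S ∪ {v}) => (a : V))).mulVecLin with hKW
  set K0 : Submodule ℝ (↥S → ℝ) := KB ⊓ LinearMap.ker (dvec A S v) with hK0
  set e : ↥KW →ₗ[ℝ] ℝ :=
    (LinearMap.proj (⟨v, hvW⟩ : ↥(S ∪ {v}))).comp KW.subtype with he
  set r : (↥(S ∪ {v}) → ℝ) →ₗ[ℝ] (↥S → ℝ) :=
    LinearMap.funLeft ℝ ℝ (Set.inclusion hSW) with hr
  have keyA : ∀ y : ↥(S ∪ {v}) → ℝ, y ⟨v, hvW⟩ = 0 →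
      ext0 (S ∪ {v}) y = ext0 S (r y) := by
    intro y hy
    funext u
    by_cases hu : u ∈ S
    · rw [show ext0 S (r y) u = (r y) ⟨u, hu⟩ from dif_pos hu,
        show ext0 (S ∪ {v}) y u = y ⟨u, hSW hu⟩ from dif_pos (hSW hu)]
      rfl
    · rw [ext0_not_mem S _ hu]
      by_cases huW : u ∈ S ∪ {v}
      · have huv : u = v := by
          rw [Set.mem_union, Set.mem_singleton_iff] at huW
          exact huW.resolve_left hu
        subst huv
        rw [show ext0 (S ∪ {u}) y u = y ⟨u, hvW⟩ from dif_pos hvW, hy]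
      · exact ext0_not_mem _ _ huW
  -- the restriction lands in K0
  have hF : ∀ y : ↥(LinearMap.ker e), r ((y : ↥KW) : ↥(S ∪ {v}) → ℝ) ∈ K0 := by
    intro y
    have hy0 : ((y : ↥KW) : ↥(S ∪ {v}) → ℝ) ⟨v, hvW⟩ = 0 := y.2
    have hker : ∀ i : ↥(S ∪ {v}),
        A.mulVec (ext0 (S ∪ {v}) ((y : ↥KW) : ↥(S ∪ {v}) → ℝ)) i = 0 :=
      (mem_ker_submatrix A (S ∪ {v}) _).mp (y : ↥KW).2
    rw [keyA _ hy0] at hker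
    refine Submodule.mem_inf.mpr ⟨?_, ?_⟩
    · exact (mem_ker_submatrix A S _).mpr fun i => hker ⟨i, hSW i.2⟩
    · have h3 := hker ⟨v, hvW⟩
      rw [mulVec_ext0] at h3
      exact LinearMap.mem_ker.mpr h3
  set F : ↥(LinearMap.ker e) →ₗ[ℝ] ↥K0 :=
    (r.comp (KW.subtype.comp (LinearMap.ker e).subtype)).codRestrict K0 hF with hFdef
  have hFbij : Function.Bijective F := by
    constructor
    · intro y₁ y₂ hfe
      have h12 : r ((y₁ : ↥KW) : ↥(S ∪ {v}) → ℝ) = r ((y₂ : ↥KW) : ↥(S ∪ {v}) → ℝ) :=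
        congrArg Subtype.val hfe
      apply Subtype.ext; apply Subtype.ext
      funext j
      have hj0 := j.2
      rw [Set.mem_union, Set.mem_singleton_iff] at hj0
      rcases hj0 with hj | hj
      · have h13 := congrFun h12 ⟨(j : V), hj⟩
        simpa [hr, LinearMap.funLeft, Set.inclusion] using h13
      · have hjv : j = ⟨v, hvW⟩ := Subtype.ext hj
        have e1 : ((y₁ : ↥KW) : ↥(S ∪ {v}) → ℝ) ⟨v, hvW⟩ = 0 := y₁.2
        have e2 : ((y₂ : ↥KW) : ↥(S ∪ {v}) → ℝ) ⟨v, hvW⟩ = 0 := y₂.2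
        rw [hjv]
        exact e1.trans e2.symm
    · rintro ⟨x, hx⟩
      have hx1 : ∀ i : ↥S, A.mulVec (ext0 S x) i = 0 :=
        (mem_ker_submatrix A S x).mp (Submodule.mem_inf.mp hx).1
      have hx2 : ∑ j : S, A v j * x j = 0 := (Submodule.mem_inf.mp hx).2
      set y : ↥(S ∪ {v}) → ℝ := fun j => ext0 S x j with hy
      have hext : ext0 (S ∪ {v}) y = ext0 S x := by
        funext u
        by_cases huW : u ∈ S ∪ {v}
        · exact dif_pos huW
        · rw [ext0_not_mem _ _ huW, ext0_not_mem S _ (fun h => huW (hSW h))]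
      have hyK : y ∈ KW := by
        refine (mem_ker_submatrix A (S ∪ {v}) y).mpr ?_
        rw [hext]
        intro i
        have hi0 := i.2
        rw [Set.mem_union, Set.mem_singleton_iff] at hi0
        rcases hi0 with hi | hi
        · exact hx1 ⟨i, hi⟩
        · rw [show ((i : V)) = v from hi, mulVec_ext0]
          exact hx2
      have hyv : y ⟨v, hvW⟩ = 0 := ext0_not_mem S _ hvS
      refine ⟨⟨⟨y, hyK⟩, hyv⟩, ?_⟩
      apply Subtype.ext
      funext j
      show (r y) j = x j
      have h5 : (r y) j = y ⟨j, hSW j.2⟩ := rfl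
      rw [h5, hy]
      show ext0 S x (j : V) = x j
      rw [show ext0 S x (j : V) = x ⟨j, j.2⟩ from dif_pos j.2]
  have hfr : Module.finrank ℝ (LinearMap.ker e) = Module.finrank ℝ K0 :=
    (LinearEquiv.ofBijective F hFbij).finrank_eq
  have hrank := LinearMap.finrank_range_add_finrank_ker e
  have hle1 : Module.finrank ℝ K0 ≤ Module.finrank ℝ KB :=
    Submodule.finrank_mono inf_le_left
  have hle2 : Module.finrank ℝ (LinearMap.range e) ≤ 1 := by
    have h6 := Submodule.finrank_le (LinearMap.range e)
    rwa [Module.finrank_self] at h6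
  have hre1 : Module.finrank ℝ (LinearMap.range e) = 1 := by omega
  have hre2 : Module.finrank ℝ K0 = Module.finrank ℝ KB := by omega
  have hK0KB : K0 = KB := Submodule.eq_of_le_of_finrank_eq inf_le_left hre2
  have H2 : ∀ x ∈ KB, ∑ j : S, A v j * x j = 0 := by
    intro x hx
    have hxx : x ∈ K0 := hK0KB.symm ▸ hx
    exact (Submodule.mem_inf.mp hxx).2
  refine ⟨H2, ?_⟩
  have hetop : LinearMap.range e = ⊤ := by
    apply Submodule.eq_top_of_finrank_eq
    rw [hre1, Module.finrank_self]
  obtain ⟨y, hy1⟩ := (LinearMap.range_eq_top.mp hetop) 1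
  set x₀ : ↥S → ℝ := r ((y : ↥(S ∪ {v}) → ℝ)) with hx0
  have hdec : ext0 (S ∪ {v}) (y : ↥(S ∪ {v}) → ℝ)
      = ext0 S x₀ + Pi.single v (1 : ℝ) := by
    funext u
    by_cases hu : u ∈ S
    · have huv : u ≠ v := fun h => hvS (h ▸ hu)
      rw [show ext0 (S ∪ {v}) (y : ↥(S ∪ {v}) → ℝ) u
            = (y : ↥(S ∪ {v}) → ℝ) ⟨u, hSW hu⟩ from dif_pos (hSW hu)]
      rw [Pi.add_apply, Pi.single_eq_of_ne huv,
        show ext0 S x₀ u = x₀ ⟨u, hu⟩ from dif_pos hu, add_zero]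
      rfl
    · by_cases huv : u = v
      · subst huv
        rw [show ext0 (S ∪ {u}) (y : ↥(S ∪ {u}) → ℝ) u
              = (y : ↥(S ∪ {u}) → ℝ) ⟨u, hvW⟩ from dif_pos hvW]
        rw [Pi.add_apply, Pi.single_eq_same, ext0_not_mem S _ hu, zero_add]
        exact hy1
      · have huW : u ∉ S ∪ {v} := by
          rw [Set.mem_union, Set.mem_singleton_iff]
          rintro (h | h); exacts [hu h, huv h]
        rw [ext0_not_mem _ _ huW, Pi.add_apply, Pi.single_eq_of_ne huv,
          ext0_not_mem S _ hu, add_zero]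
  have hker : ∀ i : ↥(S ∪ {v}),
      A.mulVec (ext0 (S ∪ {v}) (y : ↥(S ∪ {v}) → ℝ)) i = 0 :=
    (mem_ker_submatrix A (S ∪ {v}) _).mp y.2
  have hrow : ∀ i : ↥(S ∪ {v}), (∑ j : S, A (i : V) j * x₀ j) + A i v = 0 := by
    intro i
    have h7 := hker i
    rw [hdec, Matrix.mulVec_add] at h7
    simp only [Pi.add_apply, mulVec_ext0, Matrix.mulVec_single, mul_one,
      MulOpposite.op_one, one_smul, Matrix.col, Matrix.transpose_apply] at h7
    exact h7
  refine ⟨x₀, fun i => hrow ⟨i, hSW i.2⟩, ?_⟩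
  have h8 := hrow ⟨v, hvW⟩
  rw [hAvv, add_zero] at h8
  exact h8

end CutVertexAux

open CutVertexAux

set_option maxHeartbeats 1600000
set_option synthInstance.maxHeartbeats 400000

/-- Let `v` be a cut-vertex of a connected signed graph `Γ`
and `Γ₁` (with vertex set `S`) a connected component of `Γ − v`.  If
`η(Γ₁) = η(Γ₁ + v) − 1`, then `η(Γ) = η(Γ₁) + η(Γ − Γ₁)`. -/
theorem nullity_cut_vertex_one {V : Type*} [Fintype V] [DecidableEq V]
    (G : SimpleGraph V) (σ : V → V → ℝ)
    (hsym : ∀ u v, σ u v = σ v u)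
    (hσ : ∀ u v, G.Adj u v → σ u v = 1 ∨ σ u v = -1)
    (A : Matrix V V ℝ)
    (hA : ∀ u v, A u v = if G.Adj u v then σ u v else 0)
    (hconn : G.Connected) (v : V)
    (hcut : ¬ (G.induce {x : V | x ≠ v}).Connected)
    (S : Set V) (hvS : v ∉ S) (hne : S.Nonempty)
    (hScon : (G.induce S).Connected)
    (hclosed : ∀ x ∈ S, ∀ y : V, G.Adj x y → y ≠ v → y ∈ S)
    (hη : inducedNullity A S + 1 = inducedNullity A (S ∪ {v})) :
    A.nullity = inducedNullity A S + inducedNullity A Sᶜ := by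
  classical
  have hAvv : A v v = 0 := by rw [hA]; simp
  -- the zero blocks
  have hz1 : ∀ i ∈ S, ∀ j : V, j ∉ S → j ≠ v → A i j = 0 := by
    intro i hi j hj hjv
    rw [hA]
    by_cases hadj : G.Adj i j
    · exact absurd (hclosed i hi j hadj hjv) hj
    · simp [hadj]
  have hz2 : ∀ i : V, i ∉ S → i ≠ v → ∀ j ∈ S, A i j = 0 := by
    intro i hi hiv j hj
    rw [hA]
    by_cases hadj : G.Adj i j
    · exact absurd (hclosed j hj i hadj.symm hiv) hi
    · simp [hadj]
  have hvC : v ∈ Sᶜ := hvS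
  -- extraction from the hypothesis on S ∪ {v}
  obtain ⟨H2, x₀, H1a, H1b⟩ := extraction A S v hvS hAvv hη
  -- abbreviations
  set KB := LinearMap.ker
      (A.submatrix (fun a : S => (a : V)) (fun a : S => (a : V))).mulVecLin with hKB
  set KN := LinearMap.ker
      (A.submatrix (fun a : ↥Sᶜ => (a : V)) (fun a : ↥Sᶜ => (a : V))).mulVecLin with hKN
  -- sum over the complement for a row in S
  have hsum_compl : ∀ i : V, i ∈ S → ∀ z : ↥Sᶜ → ℝ,
      ∑ j : ↥Sᶜ, A i j * z j = A i v * z ⟨v, hvC⟩ := by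
    intro i hi z
    have := Fintype.sum_eq_single (⟨v, hvC⟩ : ↥Sᶜ)
      (f := fun j : ↥Sᶜ => A i j * z j) (fun b hb => by
        have hbv : (b : V) ≠ v := fun h => hb (Subtype.ext h)
        show A i b * z b = 0
        rw [hz1 i hi b b.2 hbv, zero_mul])
    simpa using this
  have hx₀row : ∀ i : ↥S, A.mulVec (ext0 S x₀) i = -A i v := by
    intro i
    rw [mulVec_ext0]
    linarith [H1a i]
  -- the main linear map
  set Φ : ((↥S → ℝ) × (↥Sᶜ → ℝ)) →ₗ[ℝ] (V → ℝ) :=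
    { toFun := fun p => ext0 S p.1 + p.2 ⟨v, hvC⟩ • ext0 S x₀ + ext0 Sᶜ p.2
      map_add' := fun p q => by
        simp only [Prod.fst_add, Prod.snd_add, map_add, Pi.add_apply, add_smul]
        abel
      map_smul' := fun c p => by
        simp only [Prod.smul_fst, Prod.smul_snd, map_smul, Pi.smul_apply,
          smul_eq_mul, RingHom.id_apply, mul_smul, smul_add]
        try abel } with hΦ
  have happS : ∀ (x : ↥S → ℝ) (z : ↥Sᶜ → ℝ) (u : ↥S),
      Φ (x, z) u = x u + z ⟨v, hvC⟩ * x₀ u := by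
    intro x z u
    have h1 : ext0 Sᶜ z u = 0 := ext0_not_mem Sᶜ z (fun h => h u.2)
    simp only [hΦ, LinearMap.coe_mk, AddHom.coe_mk, Pi.add_apply, Pi.smul_apply,
      smul_eq_mul, h1, add_zero, ext0_coe]
  have happC : ∀ (x : ↥S → ℝ) (z : ↥Sᶜ → ℝ) (u : ↥Sᶜ),
      Φ (x, z) u = z u := by
    intro x z u
    have h1 : ext0 S x u = 0 := ext0_not_mem S x u.2
    have h2 : ext0 S x₀ u = 0 := ext0_not_mem S x₀ u.2
    simp only [hΦ, LinearMap.coe_mk, AddHom.coe_mk, Pi.add_apply, Pi.smul_apply,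
      smul_eq_mul, h1, h2, mul_zero, zero_add, add_zero, ext0_coe]
  -- the row computation for Φ
  have hrowΦ : ∀ (x : ↥S → ℝ) (z : ↥Sᶜ → ℝ) (i : V),
      A.mulVec (Φ (x, z)) i
        = A.mulVec (ext0 S x) i + z ⟨v, hvC⟩ * A.mulVec (ext0 S x₀) i
          + A.mulVec (ext0 Sᶜ z) i := by
    intro x z i
    simp only [hΦ, LinearMap.coe_mk, AddHom.coe_mk, Matrix.mulVec_add,
      Matrix.mulVec_smul, Pi.add_apply, Pi.smul_apply, smul_eq_mul]
  -- Φ restricted to the kernels lands in the kernel of A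
  have hmem : ∀ p : ↥KB × ↥KN,
      Φ ((p.1 : ↥S → ℝ), (p.2 : ↥Sᶜ → ℝ)) ∈ LinearMap.ker A.mulVecLin := by
    rintro ⟨⟨x, hx⟩, ⟨z, hz⟩⟩
    have hx' := (mem_ker_submatrix A S x).mp hx
    have hz' := (mem_ker_submatrix A Sᶜ z).mp hz
    rw [LinearMap.mem_ker, Matrix.mulVecLin_apply]
    funext i
    rw [show (0 : V → ℝ) i = 0 from rfl, hrowΦ]
    by_cases hi : i ∈ S
    · have t1 := hx' ⟨i, hi⟩
      have t2 := hx₀row ⟨i, hi⟩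
      have t3 : A.mulVec (ext0 Sᶜ z) i = A i v * z ⟨v, hvC⟩ := by
        rw [mulVec_ext0]; exact hsum_compl i hi z
      rw [t1, t2, t3]; ring
    · by_cases hiv : i = v
      · subst hiv
        have t1 : A.mulVec (ext0 S x) i = 0 := by
          rw [mulVec_ext0]; exact H2 x hx
        have t2 : A.mulVec (ext0 S x₀) i = 0 := by
          rw [mulVec_ext0]; exact H1b
        have t3 := hz' ⟨i, hvC⟩
        rw [t1, t2, t3]; ring
      · have t1 : A.mulVec (ext0 S x) i = 0 := by
          rw [mulVec_ext0]
          exact Finset.sum_eq_zero fun j _ => by rw [hz2 i hi hiv j j.2, zero_mul]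
        have t2 : A.mulVec (ext0 S x₀) i = 0 := by
          rw [mulVec_ext0]
          exact Finset.sum_eq_zero fun j _ => by rw [hz2 i hi hiv j j.2, zero_mul]
        have t3 := hz' ⟨i, hi⟩
        rw [t1, t2, t3]; ring
  set f : (↥KB × ↥KN) →ₗ[ℝ] ↥(LinearMap.ker A.mulVecLin) :=
    (Φ.comp (KB.subtype.prodMap KN.subtype)).codRestrict
      (LinearMap.ker A.mulVecLin) hmem with hf
  have hfval : ∀ p : ↥KB × ↥KN,
      (f p : V → ℝ) = Φ ((p.1 : ↥S → ℝ), (p.2 : ↥Sᶜ → ℝ)) := fun p => rfl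
  have hinj : Function.Injective f := by
    intro p q hpq
    have hval : Φ ((p.1 : ↥S → ℝ), (p.2 : ↥Sᶜ → ℝ))
        = Φ ((q.1 : ↥S → ℝ), (q.2 : ↥Sᶜ → ℝ)) := by
      rw [← hfval, ← hfval, hpq]
    have hzeq : (p.2 : ↥Sᶜ → ℝ) = (q.2 : ↥Sᶜ → ℝ) := by
      funext u
      have := congrFun hval u
      rwa [happC, happC] at this
    have hxeq : (p.1 : ↥S → ℝ) = (q.1 : ↥S → ℝ) := by
      funext u
      have h5 := congrFun hval u
      rw [happS, happS, hzeq] at h5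
      exact add_right_cancel h5
    exact Prod.ext (Subtype.ext hxeq) (Subtype.ext hzeq)
  have hsurj : Function.Surjective f := by
    rintro ⟨w, hw⟩
    have hw' : ∀ i, A.mulVec w i = 0 := by
      intro i
      have := LinearMap.mem_ker.mp hw
      rw [Matrix.mulVecLin_apply] at this
      exact congrFun this i
    set t : ℝ := w v with ht
    set xw : ↥S → ℝ := fun j => w j with hxw
    set z : ↥Sᶜ → ℝ := fun j => w j with hzdef
    set x : ↥S → ℝ := xw - t • x₀ with hxdef
    have hwdec : ext0 S xw + ext0 Sᶜ z = w := by
      funext u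
      by_cases hu : u ∈ S
      · rw [Pi.add_apply, show ext0 S xw u = xw ⟨u, hu⟩ from dif_pos hu,
          ext0_not_mem Sᶜ z (fun h => (h : u ∉ S) hu), add_zero]
      · rw [Pi.add_apply, ext0_not_mem S xw hu,
          show ext0 Sᶜ z u = z ⟨u, hu⟩ from dif_pos (hu : u ∈ Sᶜ), zero_add]
    have hrows : ∀ i : V, A.mulVec (ext0 S xw) i + A.mulVec (ext0 Sᶜ z) i = 0 := by
      intro i
      have h6 : A.mulVec (ext0 S xw + ext0 Sᶜ z) i = 0 := by rw [hwdec]; exact hw' i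
      rwa [Matrix.mulVec_add, Pi.add_apply] at h6
    have hext0x : ∀ i : V, A.mulVec (ext0 S x) i
        = A.mulVec (ext0 S xw) i - t * A.mulVec (ext0 S x₀) i := by
      intro i
      rw [hxdef, map_sub, map_smul, Matrix.mulVec_sub, Matrix.mulVec_smul,
        Pi.sub_apply, Pi.smul_apply, smul_eq_mul]
    have hzv : z ⟨v, hvC⟩ = t := rfl
    have hxKB : x ∈ KB := by
      refine (mem_ker_submatrix A S x).mpr fun i => ?_
      have r1 := hrows i
      have r2 : A.mulVec (ext0 Sᶜ z) i = A i v * t := by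
        rw [mulVec_ext0, hsum_compl i i.2 z, hzv]
      have r3 := hx₀row i
      rw [hext0x, r3]
      rw [r2] at r1
      linarith
    have hzKN : z ∈ KN := by
      refine (mem_ker_submatrix A Sᶜ z).mpr fun i => ?_
      by_cases hiv : (i : V) = v
      · have r1 := hrows v
        have r4 : A.mulVec (ext0 S xw) v = 0 := by
          have hxw' : xw = x + t • x₀ := by rw [hxdef]; abel
          rw [hxw', map_add, map_smul, Matrix.mulVec_add, Matrix.mulVec_smul,
            Pi.add_apply, Pi.smul_apply, smul_eq_mul, mulVec_ext0, mulVec_ext0,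
            H2 x hxKB, H1b]
          ring
        have : A.mulVec (ext0 Sᶜ z) v = 0 := by linarith
        rw [show ((i : V)) = v from hiv]
        exact this
      · have r1 := hrows i
        have r4 : A.mulVec (ext0 S xw) i = 0 := by
          rw [mulVec_ext0]
          exact Finset.sum_eq_zero fun j _ => by rw [hz2 i i.2 hiv j j.2, zero_mul]
        linarith
    refine ⟨(⟨x, hxKB⟩, ⟨z, hzKN⟩), ?_⟩
    apply Subtype.ext
    rw [hfval]
    funext u
    by_cases hu : u ∈ S
    · have h7 := happS x z ⟨u, hu⟩
      rw [show Φ (x, z) u = Φ (x, z) (⟨u, hu⟩ : ↥S) from rfl, h7, hzv, hxdef]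
      show xw ⟨u, hu⟩ - t * x₀ ⟨u, hu⟩ + t * x₀ ⟨u, hu⟩ = w u
      rw [hxw]; ring
    · have h7 := happC x z ⟨u, hu⟩
      rw [show Φ (x, z) u = Φ (x, z) (⟨u, hu⟩ : ↥Sᶜ) from rfl, h7]
      try rfl
  have hequiv := LinearEquiv.ofBijective f ⟨hinj, hsurj⟩
  have hrk : Module.finrank ℝ (↥KB × ↥KN)
      = Module.finrank ℝ (LinearMap.ker A.mulVecLin) := hequiv.finrank_eq
  have hprod : Module.finrank ℝ (↥KB × ↥KN)
      = Module.finrank ℝ KB + Module.finrank ℝ KN := Module.finrank_prod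
  show Module.finrank ℝ (LinearMap.ker A.mulVecLin)
      = Module.finrank ℝ KB + Module.finrank ℝ KN
  omega
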